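/- Suppose along an n-periodic billiard orbit (n = 2m even) the relations l_i = λ_i + λ_{i+1} hold cyclically, where λ_i = sin α_i/(2κ_i) > 0 and l_i > 0 are the side lengths. Then the orbit is degenerate (i.e., ∏(x_i - λ_i) is constant equal to ±∏λ_i for all x_0) if and only if λ_0 λ_2 ⋯ λ_{2m-2} = λ_1 λ_3 ⋯ λ_{2m-1}. -/

import Mathlib

open Finset

private lemma prod_pair (n : ℕ) (f : ℕ → ℝ) :
    ∏ i ∈ Finset.range (2 * n), f i =
      ∏ k ∈ Finset.range n, (f (2 * k) * f (2 * k + 1)) := by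
  induction n with
  | zero => simp
  | succ n ih =>
      have h2 : 2 * (n + 1) = 2 * n + 1 + 1 := by ring
      rw [h2, Finset.prod_range_succ, Finset.prod_range_succ, ih,
        Finset.prod_range_succ, mul_assoc]

private lemma key_prod (m : ℕ) (lam : ℕ → ℝ) (x : ℕ → ℝ)
    (hne : ∀ i < 2 * m, x i ≠ lam i)
    (hrec : ∀ i, i + 1 < 2 * m →
      x (i + 1) - lam (i + 1) = -(lam (i + 1)) ^ 2 / (x i - lam i)) :
    ∏ i ∈ Finset.range (2 * m), (x i - lam i) =
      (-1 : ℝ) ^ m * (∏ k ∈ Finset.range m, lam (2 * k + 1)) ^ 2 := by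
  rw [prod_pair]
  have hpair : ∀ k ∈ Finset.range m,
      (x (2 * k) - lam (2 * k)) * (x (2 * k + 1) - lam (2 * k + 1)) =
        (-1) * (lam (2 * k + 1)) ^ 2 := by
    intro k hk
    rw [Finset.mem_range] at hk
    have hlt : 2 * k + 1 < 2 * m := by omega
    have hne' : x (2 * k) - lam (2 * k) ≠ 0 :=
      sub_ne_zero.mpr (hne (2 * k) (by omega))
    rw [hrec (2 * k) hlt, mul_div_cancel₀ _ hne']
    ring
  rw [Finset.prod_congr rfl hpair, Finset.prod_mul_distrib,
    Finset.prod_const, Finset.card_range, Finset.prod_pow]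

theorem degenerate_iff_product_identity (m : ℕ) (hm : 1 ≤ m)
    (lam : ℕ → ℝ) (hpos : ∀ i, 0 < lam i) :
    (∀ x : ℕ → ℝ, (∀ i < 2 * m, x i ≠ lam i) →
      (∀ i, i + 1 < 2 * m →
        x (i + 1) - lam (i + 1) = -(lam (i + 1)) ^ 2 / (x i - lam i)) →
      (∏ i ∈ Finset.range (2 * m), (x i - lam i) =
          ∏ i ∈ Finset.range (2 * m), lam i ∨
        ∏ i ∈ Finset.range (2 * m), (x i - lam i) =
          -∏ i ∈ Finset.range (2 * m), lam i)) ↔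
    ∏ k ∈ Finset.range m, lam (2 * k) = ∏ k ∈ Finset.range m, lam (2 * k + 1) := by
  set Pe := ∏ k ∈ Finset.range m, lam (2 * k) with hPe
  set Po := ∏ k ∈ Finset.range m, lam (2 * k + 1) with hPo
  have hPepos : 0 < Pe := Finset.prod_pos fun i _ => hpos _
  have hPopos : 0 < Po := Finset.prod_pos fun i _ => hpos _
  have hsplit : ∏ i ∈ Finset.range (2 * m), lam i = Pe * Po := by
    rw [prod_pair, Finset.prod_mul_distrib]
  constructor
  · intro H
    -- construct a valid orbit
    set x : ℕ → ℝ := fun i =>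
      Nat.rec (lam 0 + 1)
        (fun i xi => lam (i + 1) - (lam (i + 1)) ^ 2 / (xi - lam i)) i with hxdef
    have hxs : ∀ i, x (i + 1) = lam (i + 1) - (lam (i + 1)) ^ 2 / (x i - lam i) :=
      fun i => rfl
    have hne : ∀ i, x i ≠ lam i := by
      intro i
      induction i with
      | zero =>
          have h1 := hpos 0
          show lam 0 + 1 ≠ lam 0
          intro h; linarith
      | succ i ih =>
          rw [← sub_ne_zero, hxs i]
          have : lam (i + 1) - (lam (i + 1)) ^ 2 / (x i - lam i) - lam (i + 1)
              = -((lam (i + 1)) ^ 2 / (x i - lam i)) := by ring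
          rw [this]
          exact neg_ne_zero.mpr (div_ne_zero (pow_ne_zero _ (hpos (i + 1)).ne')
            (sub_ne_zero.mpr ih))
    have hrec : ∀ i, i + 1 < 2 * m →
        x (i + 1) - lam (i + 1) = -(lam (i + 1)) ^ 2 / (x i - lam i) := by
      intro i _
      rw [hxs i]; ring
    have hkey := key_prod m lam x (fun i _ => hne i) hrec
    have hH := H x (fun i _ => hne i) hrec
    rw [hkey, hsplit] at hH
    rcases Nat.even_or_odd m with he | ho
    · rw [he.neg_one_pow, one_mul] at hH
      rcases hH with h | h
      · have : Po * Po = Pe * Po := by rw [← sq]; exact h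
        exact (mul_right_cancel₀ hPopos.ne' this).symm
      · nlinarith
    · rw [ho.neg_one_pow] at hH
      rcases hH with h | h
      · nlinarith
      · have : Po * Po = Pe * Po := by nlinarith
        exact (mul_right_cancel₀ hPopos.ne' this).symm
  · intro h x hne hrec
    rw [key_prod m lam x hne hrec, hsplit, ← h, ← sq]
    rcases Nat.even_or_odd m with he | ho
    · left; rw [he.neg_one_pow, one_mul, ← hPo, h]
    · right; rw [ho.neg_one_pow, ← hPo, h]; ring
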